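/- For every u > 0 and all r, z ∈ ℝ, the Gaussian kernel φ satisfies the partial differential equation ∂_u φ(z,u,r) − a·(b − r − (δ²/a²)(1−e^{−au}))·∂_r φ(z,u,r) − (δ²/2)·∂_{rr} φ(z,u,r) = 0, where the derivatives are taken with respect to u and r. -/

import Mathlib

open Real

/-- The Gaussian kernel `φ(z,u,r)`. -/
noncomputable def phiKer (a δ b z u r : ℝ) : ℝ :=
  (Real.sqrt (2*Real.pi*(δ^2/(2*a))*(1 - Real.exp (-(2*a*u)))))⁻¹ *
    Real.exp (-(z - r*Real.exp (-(a*u)) - b*(1 - Real.exp (-(a*u)))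
      + δ^2/(2*a^2)*(1 - Real.exp (-(a*u)))^2)^2
      / (2*(δ^2/(2*a))*(1 - Real.exp (-(2*a*u)))))

lemma gauss_r1 (S v E B z r : ℝ) (hv : v ≠ 0) :
    HasDerivAt (fun r' => S * Real.exp (-(z - r'*E - B)^2/(2*v)))
      (S * Real.exp (-(z - r*E - B)^2/(2*v)) * (E*(z - r*E - B)/v)) r := by
  have h1 : HasDerivAt (fun r' : ℝ => z - r'*E - B) (-E) r := by
    simpa using (((hasDerivAt_id r).mul_const E).const_sub z).sub_const B
  have h2 : HasDerivAt (fun r' : ℝ => -(z - r'*E - B)^2/(2*v))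
      (E*(z - r*E - B)/v) r := by
    have h := ((h1.pow 2).neg).div_const (2*v)
    refine h.congr_deriv ?_
    field_simp
    ring
  have h3 := h2.exp.const_mul S
  refine h3.congr_deriv ?_
  ring

lemma gauss_r2 (S v E B z r : ℝ) (hv : v ≠ 0) :
    HasDerivAt (fun r' => S * Real.exp (-(z - r'*E - B)^2/(2*v)) * (E*(z - r'*E - B)/v))
      (S * Real.exp (-(z - r*E - B)^2/(2*v)) * ((E*(z - r*E - B)/v)^2 - E^2/v)) r := by
  have hf := gauss_r1 S v E B z r hv
  have h1 : HasDerivAt (fun r' : ℝ => z - r'*E - B) (-E) r := by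
    simpa using (((hasDerivAt_id r).mul_const E).const_sub z).sub_const B
  have hg : HasDerivAt (fun r' : ℝ => E*(z - r'*E - B)/v) (-(E^2)/v) r := by
    have h := ((h1.const_mul E).div_const v)
    refine h.congr_deriv ?_
    ring
  have h := hf.mul hg
  refine h.congr_deriv ?_
  field_simp
  ring


/-- the Gaussian kernel `φ` satisfies
`∂_u φ − a(b − r − (δ²/a²)(1−e^{−au}))·∂_r φ − (δ²/2)·∂_{rr} φ = 0`. -/
theorem phi_solves_pde (a δ b : ℝ) (ha : 0 < a) (hδ : 0 < δ) :
    ∀ u > (0:ℝ), ∀ r z : ℝ,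
      deriv (fun u' => phiKer a δ b z u' r) u
        - a*(b - r - δ^2/a^2 * (1 - Real.exp (-(a*u))))
          * deriv (fun r' => phiKer a δ b z u r') r
        - δ^2/2 * deriv (deriv (fun r' => phiKer a δ b z u r')) r = 0 := by
  intro u hu r z
  have ha' : a ≠ 0 := ne_of_gt ha
  have hδ' : δ ≠ 0 := ne_of_gt hδ
  set E : ℝ := Real.exp (-(a*u)) with hEdef
  have hE2 : Real.exp (-(2*a*u)) = E^2 := by
    rw [hEdef, show -(2*a*u) = -(a*u) + -(a*u) by ring, Real.exp_add, sq]
  have hEpos : 0 < E := Real.exp_pos _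
  have hElt : E < 1 := by
    rw [hEdef, Real.exp_lt_one_iff]; nlinarith
  have h1E : (0:ℝ) < 1 - E^2 := by nlinarith
  set v : ℝ := δ^2/(2*a)*(1 - E^2) with hvdef
  have hv : 0 < v := by
    apply mul_pos (by positivity) h1E
  have hv' : v ≠ 0 := ne_of_gt hv
  set S : ℝ := (Real.sqrt (2*Real.pi*(δ^2/(2*a))*(1 - Real.exp (-(2*a*u)))))⁻¹ with hSdef
  set B : ℝ := b*(1 - E) - δ^2/(2*a^2)*(1 - E)^2 with hBdef
  have hphi : ∀ r', phiKer a δ b z u r' = S * Real.exp (-(z - r'*E - B)^2/(2*v)) := by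
    intro r'
    rw [phiKer, hSdef]
    congr 2
    rw [hE2, hvdef, hBdef]
    ring
  -- first r-derivative
  have hder_r : deriv (fun r' => phiKer a δ b z u r') r
      = phiKer a δ b z u r * (E*(z - r*E - B)/v) := by
    rw [show (fun r' => phiKer a δ b z u r') = fun r' => S * Real.exp (-(z - r'*E - B)^2/(2*v))
      from funext hphi, (gauss_r1 S v E B z r hv').deriv, hphi r]
  -- second r-derivative
  have hder_rr : deriv (deriv (fun r' => phiKer a δ b z u r')) r
      = phiKer a δ b z u r * ((E*(z - r*E - B)/v)^2 - E^2/v) := by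
    have h1 : deriv (fun r' => phiKer a δ b z u r')
        = fun r' => S * Real.exp (-(z - r'*E - B)^2/(2*v)) * (E*(z - r'*E - B)/v) := by
      funext r'
      rw [show (fun r' => phiKer a δ b z u r') = fun r' => S * Real.exp (-(z - r'*E - B)^2/(2*v))
        from funext hphi, (gauss_r1 S v E B z r' hv').deriv]
    rw [h1, (gauss_r2 S v E B z r hv').deriv, hphi r]
  -- u-derivative
  have heq : (fun u' => phiKer a δ b z u' r) =ᶠ[nhds u] fun u' =>
      Real.exp (-Real.log (2*Real.pi*(δ^2/(2*a))*(1 - Real.exp (-(2*a*u'))))/2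
        + -(z - r*Real.exp (-(a*u')) - b*(1 - Real.exp (-(a*u')))
            + δ^2/(2*a^2)*(1 - Real.exp (-(a*u')))^2)^2
          / (2*(δ^2/(2*a))*(1 - Real.exp (-(2*a*u'))))) := by
    filter_upwards [eventually_gt_nhds hu] with u' hu'
    have h1 : Real.exp (-(2*a*u')) < 1 := by rw [Real.exp_lt_one_iff]; nlinarith
    have h2 : (0:ℝ) < δ^2/(2*a) := by positivity
    have hX : 0 < 2*Real.pi*(δ^2/(2*a))*(1 - Real.exp (-(2*a*u'))) := by
      apply mul_pos (by positivity) (by linarith)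
    rw [phiKer, Real.sqrt_eq_rpow, Real.rpow_def_of_pos hX, ← Real.exp_neg, ← Real.exp_add]
    congr 1
    ring
  have hEd : HasDerivAt (fun u' => Real.exp (-(a*u'))) (E * -a) u := by
    have h : HasDerivAt (fun u' : ℝ => -(a*u')) (-a) u := by
      exact (((hasDerivAt_id u).const_mul a).neg).congr_deriv (by ring)
    exact h.exp
  have hE2d : HasDerivAt (fun u' => Real.exp (-(2*a*u'))) (E^2 * -(2*a)) u := by
    have h : HasDerivAt (fun u' : ℝ => -(2*a*u')) (-(2*a)) u := by
      exact (((hasDerivAt_id u).const_mul (2*a)).neg).congr_deriv (by ring)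
    have h2 := h.exp
    rwa [hE2] at h2
  have hX0 : 2*Real.pi*(δ^2/(2*a))*(1 - Real.exp (-(2*a*u))) ≠ 0 := by
    rw [hE2]
    have := Real.pi_pos
    exact ne_of_gt (mul_pos (by positivity) h1E)
  have hD0 : 2*(δ^2/(2*a))*(1 - Real.exp (-(2*a*u))) ≠ 0 := by
    rw [hE2]
    exact ne_of_gt (mul_pos (by positivity) h1E)
  have hm1 := hEd.const_mul r
  have hm2 := hEd.const_sub 1
  have hm3 := hm2.const_mul b
  have hm4 := (hm2.pow 2).const_mul (δ^2/(2*a^2))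
  have hnum := (((hasDerivAt_const u z).sub hm1).sub hm3).add hm4
  have hN := (hnum.pow 2).neg
  have hD := (hE2d.const_sub 1).const_mul (2*(δ^2/(2*a)))
  have hQ := hN.div hD hD0
  have hXd := (hE2d.const_sub 1).const_mul (2*Real.pi*(δ^2/(2*a)))
  have hlog := ((hXd.log hX0).neg).div_const 2
  have hG := (hlog.add hQ).exp
  have hder_u := hG.deriv
  erw [← Filter.EventuallyEq.deriv_eq heq, ← Filter.EventuallyEq.eq_of_nhds heq] at hder_u
  simp only [Pi.add_apply, Pi.sub_apply, Pi.neg_apply, Pi.pow_apply, Pi.div_apply, ← hEdef, Nat.cast_ofNat, Nat.reduceSub, pow_one] at hder_u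
  rw [hder_u, hder_r, hder_rr]
  rw [hE2, hBdef, hvdef]
  set P := phiKer a δ b z u r
  have hpi := Real.pi_ne_zero
  have h1E' : (1:ℝ) - E^2 ≠ 0 := ne_of_gt h1E
  field_simp
  ring
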